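/- In the formal power series ring ℂ[[X]], the family (X^k · e^{αX}) indexed by pairs (k, α) ∈ ℕ × ℂ, where e^{αX} = Σ_{n≥0} αⁿXⁿ/n!, is linearly independent over ℂ. -/

import Mathlib

open PowerSeries

noncomputable def E (α : ℂ) : PowerSeries ℂ :=
  PowerSeries.mk (fun n => α ^ n / (Nat.factorial n : ℂ))

lemma E_ne_zero (α : ℂ) : E α ≠ 0 := by
  intro h
  have : (PowerSeries.coeff 0) (E α) = 0 := by rw [h]; simp
  simp [E] at this

lemma derivative_E (α : ℂ) : d⁄dX ℂ (E α) = α • E α := by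
  ext n
  rw [coeff_derivative]
  simp only [E, coeff_mk, map_smul, smul_eq_mul]
  have h2 : ((Nat.factorial n : ℕ) : ℂ) ≠ 0 := Nat.cast_ne_zero.2 (Nat.factorial_ne_zero n)
  have h1 : ((n : ℂ) + 1) ≠ 0 := by
    exact_mod_cast (Nat.cast_ne_zero (R := ℂ)).2 (Nat.succ_ne_zero n)
  have h3 : ((n + 1).factorial : ℂ) = ((n : ℂ) + 1) * (Nat.factorial n : ℂ) := by
    push_cast [Nat.factorial_succ]; ring
  rw [h3, pow_succ]
  field_simp

noncomputable def D : Module.End ℂ (PowerSeries ℂ) := (d⁄dX ℂ).toLinearMap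

noncomputable def L (α : ℂ) : Module.End ℂ (PowerSeries ℂ) := D - α • 1

lemma L_apply_zero (α : ℂ) : L α (E α) = 0 := by
  simp [L, D, derivative_E, sub_eq_zero]

lemma L_apply_succ (α : ℂ) (k : ℕ) :
    L α ((X : PowerSeries ℂ) ^ (k + 1) * E α) = ((k + 1 : ℕ) : ℂ) • ((X : PowerSeries ℂ) ^ k * E α) := by
  have hD : (d⁄dX ℂ) ((X : PowerSeries ℂ) ^ (k + 1) * E α)
      = (X : PowerSeries ℂ) ^ (k + 1) * (α • E α) + E α * ((k + 1 : ℕ) • ((X:PowerSeries ℂ) ^ k)) := by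
    rw [Derivation.leibniz, derivative_E, Derivation.leibniz_pow]
    simp only [smul_eq_mul, Nat.add_sub_cancel, derivative_X, mul_one]
  simp only [L, LinearMap.sub_apply, LinearMap.smul_apply, Module.End.one_apply]
  have hDe : D ((X : PowerSeries ℂ) ^ (k + 1) * E α) = (d⁄dX ℂ) ((X : PowerSeries ℂ) ^ (k + 1) * E α) := rfl
  rw [hDe, hD]
  simp only [nsmul_eq_mul, PowerSeries.smul_eq_C_mul, map_add, map_one, map_natCast]
  push_cast
  ring

lemma L_pow (α : ℂ) (k : ℕ) : ((L α) ^ (k + 1)) ((X : PowerSeries ℂ) ^ k * E α) = 0 := by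
  induction k with
  | zero => simpa using L_apply_zero α
  | succ k ih =>
    rw [pow_succ, Module.End.mul_apply, L_apply_succ, map_smul, ih, smul_zero]

lemma mem_gen (α : ℂ) (k : ℕ) :
    (X : PowerSeries ℂ) ^ k * E α ∈ D.genEigenspace α ⊤ := by
  rw [Module.End.mem_genEigenspace_top]
  exact ⟨k + 1, L_pow α k⟩

lemma X_pow_linInd : LinearIndependent ℂ (fun k : ℕ => (X : PowerSeries ℂ) ^ k) := by
  rw [linearIndependent_iff']
  intro s g h i hi
  have := congrArg (PowerSeries.coeff i) h
  simp only [map_sum, map_smul, PowerSeries.coeff_X_pow, smul_eq_mul, map_zero] at this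
  rwa [Finset.sum_eq_single i (fun j _ hj => by simp [Ne.symm hj]) (fun h => absurd hi h),
    if_pos rfl, mul_one] at this

lemma linInd_fixed (α : ℂ) :
    LinearIndependent ℂ (fun k : ℕ => (X : PowerSeries ℂ) ^ k * E α) := by
  have := X_pow_linInd.map' (LinearMap.mulRight ℂ (E α)) ?_
  · exact this
  · rw [LinearMap.ker_eq_bot]
    intro a b hab
    exact mul_right_cancel₀ (E_ne_zero α) hab


/-- In `ℂ[[X]]`, the family `(X^k · e^{αX})` indexed by pairs
`(k, α) ∈ ℕ × ℂ`, where `e^{αX} = Σ αⁿXⁿ/n!`, is linearly independent over `ℂ`. -/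
theorem monomials_times_exponentials_linearly_independent :
    LinearIndependent ℂ
      (fun p : ℕ × ℂ =>
        (PowerSeries.X ^ p.1 *
          PowerSeries.mk (fun n => p.2 ^ n / (Nat.factorial n : ℂ)) : PowerSeries ℂ)) := by
  have hsig : LinearIndependent ℂ
      (fun ji : Σ _ : ℂ, ℕ => (X : PowerSeries ℂ) ^ ji.2 * E ji.1) := by
    apply linearIndependent_iUnion_finite (f := fun (α : ℂ) (k : ℕ) => (X : PowerSeries ℂ) ^ k * E α)
      (fun α => linInd_fixed α)
    intro i t _ hit
    have hind := Module.End.independent_genEigenspace D (⊤ : ℕ∞)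
    have hspan : ∀ α : ℂ, Submodule.span ℂ (Set.range fun k : ℕ => (X : PowerSeries ℂ) ^ k * E α)
        ≤ D.genEigenspace α ⊤ := by
      intro α
      rw [Submodule.span_le]
      rintro _ ⟨k, rfl⟩
      exact mem_gen α k
    refine Disjoint.mono (hspan i) ?_ (hind i)
    refine iSup₂_le fun j hj => (hspan j).trans ?_
    exact le_iSup₂ (f := fun j (_ : j ≠ i) => D.genEigenspace j ⊤) j (fun h => hit (h ▸ hj))
  exact (linearIndependent_equiv' ((Equiv.prodComm ℕ ℂ).trans (Equiv.sigmaEquivProd ℂ ℕ).symm)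
    (f := fun ji : Σ _ : ℂ, ℕ => (X : PowerSeries ℂ) ^ ji.2 * E ji.1)
    (funext fun p => rfl)).2 hsig
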